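/- For all n ≥ 2, the set D = {(0,0,1), (n−1,n−1,2)} is an (n−1)-quasi-perfect code in P_n □ P_n □ P_4: the codewords are at distance 2n−1, and the covering radius of D is exactly n. -/
import Mathlib


/-- Distance between labels on a path: `|x - y|`. -/
def pathDist (x y : ℕ) : ℕ := ((x : ℤ) - y).natAbs

theorem quasi_perfect_code_in_Pn_Pn_P4 (n : ℕ) (hn : 2 ≤ n) :
    -- L1 distance in P_n □ P_n □ P_4
    let dist : Fin n × Fin n × Fin 4 → Fin n × Fin n × Fin 4 → ℕ :=
      fun p q => pathDist p.1.val q.1.val + pathDist p.2.1.val q.2.1.val +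
        pathDist p.2.2.val q.2.2.val
    let c0 : Fin n × Fin n × Fin 4 := (⟨0, by omega⟩, ⟨0, by omega⟩, 1)
    let c1 : Fin n × Fin n × Fin 4 := (⟨n - 1, by omega⟩, ⟨n - 1, by omega⟩, 2)
    let D : Set (Fin n × Fin n × Fin 4) := {c0, c1}
    -- the two codewords are at distance 2n-1
    dist c0 c1 = 2 * n - 1 ∧
    -- covering radius exactly n
    (∀ v : Fin n × Fin n × Fin 4, ∃ d ∈ D, dist v d ≤ n) ∧
    (∃ v : Fin n × Fin n × Fin 4, ∀ d ∈ D, n ≤ dist v d) := by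
  intro dist c0 c1 D
  have h1 : ((1 : Fin 4)).val = 1 := rfl
  have h2 : ((2 : Fin 4)).val = 2 := rfl
  refine ⟨?_, ?_, ?_⟩
  · simp only [dist, c0, c1, pathDist, h1, h2]
    omega
  · intro v
    have hx := v.1.isLt
    have hy := v.2.1.isLt
    have hz := v.2.2.isLt
    by_cases h : dist v c0 ≤ n
    · exact ⟨c0, Or.inl rfl, h⟩
    · refine ⟨c1, Or.inr rfl, ?_⟩
      simp only [dist, c0, c1, pathDist, h1, h2] at *
      omega
  · refine ⟨(⟨n - 1, by omega⟩, ⟨0, by omega⟩, 0), ?_⟩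
    intro d hd
    simp only [D, Set.mem_insert_iff, Set.mem_singleton_iff] at hd
    rcases hd with rfl | rfl <;>
    · simp only [dist, c0, c1, pathDist, h1, h2]
      omega
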